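/- For every integer d ≥ 1, the hypercube Q_d satisfies edim(Q_d) ≤ dim(Q_d) ≤ edim(Q_d) + 1. -/

import Mathlib

/-- Distance from a vertex `s` to an edge `e` (as an element of `Sym2 V`):
the minimum of the distances from `s` to the two endpoints of `e`. -/
noncomputable def edgeDist {V : Type*} (G : SimpleGraph V) (e : Sym2 V) (s : V) : ℕ :=
  Sym2.lift ⟨fun x y => min (G.dist x s) (G.dist y s), fun _ _ => min_comm _ _⟩ e

/-- `S` is a metric generator for `G`: every pair of distinct vertices is
distinguished by some element of `S`. -/
def IsMetricGen {V : Type*} (G : SimpleGraph V) (S : Set V) : Prop :=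
  ∀ u v : V, u ≠ v → ∃ s ∈ S, G.dist s u ≠ G.dist s v

/-- `S` is an edge metric generator for `G`: every pair of distinct edges is
distinguished by some element of `S`. -/
def IsEdgeMetricGen {V : Type*} (G : SimpleGraph V) (S : Set V) : Prop :=
  ∀ e₁ ∈ G.edgeSet, ∀ e₂ ∈ G.edgeSet, e₁ ≠ e₂ → ∃ s ∈ S, edgeDist G e₁ s ≠ edgeDist G e₂ s

/-- Distance from a vertex `s` to a mixed element (a vertex or an edge). -/
noncomputable def mixedDist {V : Type*} (G : SimpleGraph V) (a : V ⊕ Sym2 V) (s : V) : ℕ :=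
  Sum.elim (fun w => G.dist s w) (fun e => edgeDist G e s) a

/-- A mixed element is valid if it is a vertex, or an actual edge of `G`. -/
def IsMixedElem {V : Type*} (G : SimpleGraph V) (a : V ⊕ Sym2 V) : Prop :=
  Sum.elim (fun _ => True) (fun e => e ∈ G.edgeSet) a

/-- `S` is a mixed metric generator for `G`: every pair of distinct elements of
`V(G) ∪ E(G)` is distinguished by some element of `S`. -/
def IsMixedMetricGen {V : Type*} (G : SimpleGraph V) (S : Set V) : Prop :=
  ∀ a b : V ⊕ Sym2 V, IsMixedElem G a → IsMixedElem G b → a ≠ b →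
    ∃ s ∈ S, mixedDist G a s ≠ mixedDist G b s

/-- The metric dimension: minimum cardinality of a metric generator. -/
noncomputable def metricDim {V : Type*} [Fintype V] (G : SimpleGraph V) : ℕ :=
  sInf {n | ∃ S : Finset V, S.card = n ∧ IsMetricGen G ↑S}

/-- The edge metric dimension: minimum cardinality of an edge metric generator. -/
noncomputable def edgeMetricDim {V : Type*} [Fintype V] (G : SimpleGraph V) : ℕ :=
  sInf {n | ∃ S : Finset V, S.card = n ∧ IsEdgeMetricGen G ↑S}

/-- The mixed metric dimension: minimum cardinality of a mixed metric generator. -/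
noncomputable def mixedMetricDim {V : Type*} [Fintype V] (G : SimpleGraph V) : ℕ :=
  sInf {n | ∃ S : Finset V, S.card = n ∧ IsMixedMetricGen G ↑S}

/-- The hypercube `Q_d`: vertices are binary vectors of length `d`, with two
vertices adjacent iff they differ in exactly one coordinate. -/
def cube (d : ℕ) : SimpleGraph (Fin d → Bool) where
  Adj u v := hammingDist u v = 1
  symm := ⟨fun u v (h : hammingDist u v = 1) => show hammingDist v u = 1 by simp only [hammingDist_comm] at h ⊢; exact h⟩
  loopless := ⟨fun u (h : hammingDist u u = 1) => by simp only [hammingDist_self] at h; exact one_ne_zero h.symm⟩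

section Aux
variable {d : ℕ}

private lemma hd_sum (u v : Fin d → Bool) :
    hammingDist u v = ∑ i, if u i ≠ v i then 1 else 0 := by
  simp [hammingDist, Finset.card_filter]

private lemma parity3 (u v w : Fin d → Bool) :
    (hammingDist u v + hammingDist v w + hammingDist u w) % 2 = 0 := by
  rw [← Nat.even_iff]
  rw [hd_sum, hd_sum, hd_sum, ← Finset.sum_add_distrib, ← Finset.sum_add_distrib]
  refine Finset.sum_induction _ Even (fun a b => Even.add) Even.zero ?_
  intro i _
  cases hu : u i <;> cases hv : v i <;> cases hw : w i <;> simp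

private lemma hd_update (u v : Fin d → Bool) (i : Fin d) (b : Bool) :
    hammingDist (Function.update u i b) v + (if u i ≠ v i then 1 else 0)
      = hammingDist u v + (if b ≠ v i then 1 else 0) := by
  rw [hd_sum, hd_sum,
    ← Finset.add_sum_erase _ _ (Finset.mem_univ i),
    ← Finset.add_sum_erase _ _ (Finset.mem_univ i)]
  have hsum : ∑ j ∈ Finset.univ.erase i, (if Function.update u i b j ≠ v j then 1 else 0)
      = ∑ j ∈ Finset.univ.erase i, (if u j ≠ v j then 1 else 0) :=
    Finset.sum_congr rfl fun j hj => by
      rw [Function.update_of_ne (Finset.ne_of_mem_erase hj)]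
  rw [hsum, Function.update_self]
  omega

private lemma flip_eq (u s : Fin d → Bool) (i : Fin d) (h : s i = u i) :
    hammingDist (Function.update u i (!u i)) s = hammingDist u s + 1 := by
  have h2 := hd_update u s i (!u i)
  rw [h] at h2
  simp at h2
  omega

private lemma flip_ne (u s : Fin d → Bool) (i : Fin d) (h : s i ≠ u i) :
    hammingDist (Function.update u i (!u i)) s + 1 = hammingDist u s := by
  have h2 := hd_update u s i (!u i)
  have h3 : s i = !u i := by cases hu : u i <;> cases hs : s i <;> simp_all
  rw [h3] at h2
  simp at h2
  omega

private lemma flip_adj (u : Fin d → Bool) (i : Fin d) :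
    (cube d).Adj u (Function.update u i (!u i)) := by
  show hammingDist u (Function.update u i (!u i)) = 1
  rw [hammingDist_comm]
  have h2 := hd_update u u i (!u i)
  simp [hammingDist_self] at h2
  omega

private lemma hd_compl (s u v : Fin d → Bool) (h : ∀ i, u i ≠ v i) :
    hammingDist s u + hammingDist s v = d := by
  rw [hd_sum, hd_sum, ← Finset.sum_add_distrib]
  have h2 : ∀ i ∈ Finset.univ, ((if s i ≠ u i then 1 else 0) + if s i ≠ v i then 1 else 0) = 1 := by
    intro i _
    have := h i
    cases hs : s i <;> cases hu : u i <;> cases hv : v i <;> simp_all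
  rw [Finset.sum_congr rfl h2]
  simp

private lemma exists_walk (n : ℕ) : ∀ u v : Fin d → Bool, hammingDist u v = n →
    ∃ p : (cube d).Walk u v, p.length = n := by
  induction n with
  | zero =>
    intro u v h
    rw [hammingDist_eq_zero] at h
    subst h
    exact ⟨SimpleGraph.Walk.nil, rfl⟩
  | succ n ih =>
    intro u v h
    have hex : ∃ i, u i ≠ v i := by
      by_contra hc
      push_neg at hc
      have : u = v := funext hc
      subst this
      simp [hammingDist_self] at h
    obtain ⟨i, hi⟩ := hex
    have hadj : (cube d).Adj u (Function.update u i (v i)) := by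
      show hammingDist u (Function.update u i (v i)) = 1
      rw [hammingDist_comm]
      have h2 := hd_update u u i (v i)
      simp [hammingDist_self, Ne.symm hi] at h2
      omega
    have h' : hammingDist (Function.update u i (v i)) v = n := by
      have h2 := hd_update u v i (v i)
      simp [hi] at h2
      omega
    obtain ⟨p, hp⟩ := ih _ v h'
    exact ⟨SimpleGraph.Walk.cons hadj p, by simp [hp]⟩

private lemma hd_le_walk {u v : Fin d → Bool} (p : (cube d).Walk u v) :
    hammingDist u v ≤ p.length := by
  induction p with
  | nil => simp [hammingDist_self]
  | @cons a b c h p ih =>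
    have h1 : hammingDist a b = 1 := h
    have h2 := hammingDist_triangle a b c
    simp only [SimpleGraph.Walk.length_cons]
    omega

private lemma cube_dist (u v : Fin d → Bool) : (cube d).dist u v = hammingDist u v := by
  obtain ⟨p, hp⟩ := exists_walk _ u v rfl
  refine le_antisymm (hp ▸ SimpleGraph.dist_le p) ?_
  have hr : (cube d).Reachable u v := ⟨p⟩
  obtain ⟨q, hq⟩ := hr.exists_walk_length_eq_dist
  rw [← hq]
  exact hd_le_walk q

private lemma edgeDist_mk (p q s : Fin d → Bool) :
    edgeDist (cube d) s(p, q) s = min (hammingDist p s) (hammingDist q s) := by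
  simp [edgeDist, cube_dist]

private lemma min_ne_of {da db dx dy : ℕ} (h1 : da + 2 ≤ dx) (h2 : dx ≤ dy + 1) :
    min da db ≠ min dx dy := by
  have a1 := min_le_left da db
  have a2 : dx - 1 ≤ min dx dy := le_min (by omega) (by omega)
  omega

private lemma adj_close {u v : Fin d → Bool} (h : (cube d).Adj u v) (s : Fin d → Bool) :
    hammingDist u s ≤ hammingDist v s + 1 ∧ hammingDist v s ≤ hammingDist u s + 1 := by
  have h1 : hammingDist u v = 1 := h
  have h2 := hammingDist_triangle u v s
  have h3 := hammingDist_triangle v u s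
  rw [hammingDist_comm v u] at h3
  omega

private lemma L1 {S : Set (Fin d → Bool)} (hS : IsMetricGen (cube d) S)
    {a b x y : Fin d → Bool} (hab : (cube d).Adj a b) (hxy : (cube d).Adj x y)
    (hax : a ≠ x) (hpar : hammingDist a x % 2 = 0) :
    ∃ s ∈ S, min (hammingDist a s) (hammingDist b s) ≠ min (hammingDist x s) (hammingDist y s) := by
  obtain ⟨s, hsS, hs⟩ := hS a x hax
  rw [cube_dist, cube_dist] at hs
  rw [hammingDist_comm s a, hammingDist_comm s x] at hs
  refine ⟨s, hsS, ?_⟩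
  have hpair := parity3 a x s
  have hb := adj_close hab s
  have hy := adj_close hxy s
  rcases lt_or_gt_of_ne hs with h | h
  · exact min_ne_of (by omega) (by omega)
  · exact (min_ne_of (by omega) (by omega)).symm

private lemma metric_to_edge {S : Set (Fin d → Bool)} (hS : IsMetricGen (cube d) S) :
    IsEdgeMetricGen (cube d) S := by
  intro e1 he1 e2 he2 hne
  induction e1 using Sym2.ind with | _ u v =>
  induction e2 using Sym2.ind with | _ x y =>
  rw [SimpleGraph.mem_edgeSet] at he1 he2
  simp only [edgeDist_mk]
  have huv : hammingDist u v = 1 := he1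
  have hxy : hammingDist x y = 1 := he2
  have hne1 : ¬(u = x ∧ v = y) := fun ⟨h1, h2⟩ => hne (by rw [h1, h2])
  have hne2 : ¬(u = y ∧ v = x) := fun ⟨h1, h2⟩ => hne (by rw [h1, h2, Sym2.eq_swap])
  by_cases hpar : hammingDist u x % 2 = 0
  · by_cases hux : u = x
    · subst hux
      have hvy : v ≠ y := fun h => hne1 ⟨rfl, h⟩
      have hpar2 : hammingDist v y % 2 = 0 := by
        have p1 := parity3 v u y
        have h1 : hammingDist v u = 1 := by rw [hammingDist_comm]; exact huv
        omega
      obtain ⟨s, hsS, hsne⟩ := L1 hS ((cube d).adj_symm he1) ((cube d).adj_symm he2) hvy hpar2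
      exact ⟨s, hsS, by rwa [min_comm (hammingDist v s), min_comm (hammingDist y s)] at hsne⟩
    · obtain ⟨s, hsS, hsne⟩ := L1 hS he1 he2 hux hpar
      exact ⟨s, hsS, hsne⟩
  · have hpar' : hammingDist v x % 2 = 0 := by
      have p1 := parity3 u v x
      have p2 := parity3 u x x
      simp [hammingDist_self] at p2
      have p3 : hammingDist v x = hammingDist x v := hammingDist_comm _ _
      have p4 := parity3 v x x
      simp [hammingDist_self] at p4
      omega
    by_cases hvx : v = x
    · subst hvx
      have huy : u ≠ y := fun h => hne2 ⟨h, rfl⟩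
      have hpar2 : hammingDist u y % 2 = 0 := by
        have p1 := parity3 u v y
        have h1 : hammingDist v y = 1 := he2
        omega
      obtain ⟨s, hsS, hsne⟩ := L1 hS he1 ((cube d).adj_symm he2) huy hpar2
      exact ⟨s, hsS, by rwa [min_comm (hammingDist y s)] at hsne⟩
    · obtain ⟨s, hsS, hsne⟩ := L1 hS ((cube d).adj_symm he1) he2 hvx hpar'
      exact ⟨s, hsS, by rwa [min_comm (hammingDist v s)] at hsne⟩

private lemma univ_metric : IsMetricGen (cube d) ↑(Finset.univ : Finset (Fin d → Bool)) := by
  intro u v huv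
  refine ⟨u, by simp, ?_⟩
  rw [cube_dist, cube_dist, hammingDist_self]
  exact fun h => (hammingDist_ne_zero.mpr huv) h.symm

private lemma univ_edge : IsEdgeMetricGen (cube d) ↑(Finset.univ : Finset (Fin d → Bool)) := by
  intro e1 he1 e2 he2 hne
  induction e1 using Sym2.ind with | _ u v =>
  induction e2 using Sym2.ind with | _ x y =>
  rw [SimpleGraph.mem_edgeSet] at he1 he2
  simp only [edgeDist_mk]
  have huv : u ≠ v := (cube d).ne_of_adj he1
  have hxy : x ≠ y := (cube d).ne_of_adj he2
  have key : ∀ s : Fin d → Bool, s ≠ x → s ≠ y →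
      min (hammingDist x s) (hammingDist y s) ≠ 0 := by
    intro s hsx hsy
    have h1 : hammingDist x s ≠ 0 := hammingDist_ne_zero.mpr (Ne.symm hsx)
    have h2 : hammingDist y s ≠ 0 := hammingDist_ne_zero.mpr (Ne.symm hsy)
    omega
  by_cases hux : u = x
  · subst hux
    have hvy : v ≠ y := fun h => hne (by rw [h])
    refine ⟨v, by simp, ?_⟩
    have : min (hammingDist u v) (hammingDist v v) = 0 := by
      simp [hammingDist_self]
    rw [this]
    exact fun h => key v (Ne.symm huv) hvy h.symm
  · by_cases huy : u = y
    · subst huy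
      have hvx : v ≠ x := fun h => hne (by rw [h, Sym2.eq_swap])
      refine ⟨v, by simp, ?_⟩
      have : min (hammingDist u v) (hammingDist v v) = 0 := by
        simp [hammingDist_self]
      rw [this]
      exact fun h => key v hvx (Ne.symm huv) h.symm
    · refine ⟨u, by simp, ?_⟩
      have : min (hammingDist u u) (hammingDist v u) = 0 := by
        simp [hammingDist_self]
      rw [this]
      exact fun h => key u hux huy h.symm

private lemma edge_to_metric (hd1 : 1 ≤ d) {S : Finset (Fin d → Bool)}
    (s0 : Fin d → Bool) (hs0 : s0 ∈ S) (hS : IsEdgeMetricGen (cube d) ↑S) :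
    IsMetricGen (cube d)
      ↑(insert (Function.update s0 ⟨0, hd1⟩ (!s0 ⟨0, hd1⟩)) S) := by
  classical
  set i0 : Fin d := ⟨0, hd1⟩
  set w : Fin d → Bool := Function.update s0 i0 (!s0 i0) with hw
  intro u v huv
  by_cases hdist : ∃ s ∈ S, hammingDist s u ≠ hammingDist s v
  · obtain ⟨s, hsS, h⟩ := hdist
    exact ⟨s, by simp [hsS], by rw [cube_dist, cube_dist]; exact h⟩
  · push_neg at hdist
    have hall : ∀ i, u i ≠ v i := by
      intro i hi
      have he1 := flip_adj u i
      have he2 := flip_adj v i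
      have hne : s(u, Function.update u i (!u i)) ≠ s(v, Function.update v i (!v i)) := by
        intro hEq
        rw [Sym2.eq_iff] at hEq
        rcases hEq with ⟨rfl, -⟩ | ⟨h1, h2⟩
        · exact huv rfl
        · have h3 : u i = !v i := by rw [h1, Function.update_self]
          rw [hi] at h3
          simp at h3
      obtain ⟨s, hsS, hsne⟩ := hS _ ((cube d).mem_edgeSet.mpr he1) _
        ((cube d).mem_edgeSet.mpr he2) hne
      apply hsne
      rw [edgeDist_mk, edgeDist_mk]
      have hsS' : s ∈ S := by simpa using hsS
      have ha := hdist s hsS'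
      rw [hammingDist_comm s u, hammingDist_comm s v] at ha
      by_cases hsi : s i = u i
      · have h1 := flip_eq u s i hsi
        have h2 := flip_eq v s i (hi ▸ hsi)
        rw [h1, h2, ha]
      · have h1 := flip_ne u s i hsi
        have h2 := flip_ne v s i (hi ▸ hsi)
        have m1 : min (hammingDist u s) (hammingDist (Function.update u i (!u i)) s)
            = hammingDist (Function.update u i (!u i)) s := min_eq_right (by omega)
        have m2 : min (hammingDist v s) (hammingDist (Function.update v i (!v i)) s)
            = hammingDist (Function.update v i (!v i)) s := min_eq_right (by omega)
        rw [m1, m2]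
        omega
    have hcompl := hd_compl s0 u v hall
    have hcw := hd_compl w u v hall
    have ha0 := hdist s0 hs0
    refine ⟨w, by simp, ?_⟩
    rw [cube_dist, cube_dist]
    by_cases hc : u i0 = s0 i0
    · have h1 := flip_eq s0 u i0 hc
      rw [← hw] at h1
      omega
    · have h1 := flip_ne s0 u i0 hc
      rw [← hw] at h1
      omega

end Aux


/-- For every `d ≥ 1`, `edim(Q_d) ≤ dim(Q_d) ≤ edim(Q_d) + 1`. -/
theorem stmt7 (d : ℕ) (hd : 1 ≤ d) :
    edgeMetricDim (cube d) ≤ metricDim (cube d) ∧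
      metricDim (cube d) ≤ edgeMetricDim (cube d) + 1 := by
  classical
  obtain ⟨Sm, hSmcard, hSm⟩ :
      metricDim (cube d) ∈
        {n | ∃ S : Finset (Fin d → Bool), S.card = n ∧ IsMetricGen (cube d) ↑S} :=
    Nat.sInf_mem ⟨_, Finset.univ, rfl, univ_metric⟩
  obtain ⟨Se, hSecard, hSe⟩ :
      edgeMetricDim (cube d) ∈
        {n | ∃ S : Finset (Fin d → Bool), S.card = n ∧ IsEdgeMetricGen (cube d) ↑S} :=
    Nat.sInf_mem ⟨_, Finset.univ, rfl, univ_edge⟩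
  constructor
  · exact hSmcard ▸ Nat.sInf_le ⟨Sm, rfl, metric_to_edge hSm⟩
  · rcases Finset.eq_empty_or_nonempty Se with rfl | ⟨s0, hs0⟩
    · by_cases hd2 : 2 ≤ d
      · exfalso
        set z : Fin d → Bool := fun _ => false with hz
        set a : Fin d → Bool := Function.update z ⟨0, by omega⟩ (!z ⟨0, by omega⟩) with hazz
        set b : Fin d → Bool := Function.update z ⟨1, by omega⟩ (!z ⟨1, by omega⟩) with hbzz
        have he1 := flip_adj z ⟨0, by omega⟩
        have he2 := flip_adj z ⟨1, by omega⟩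
        have hab : a ≠ b := by
          intro h
          have := congrFun h ⟨0, by omega⟩
          rw [hazz, hbzz] at this
          rw [Function.update_self] at this
          rw [Function.update_of_ne (by simp [Fin.ext_iff])] at this
          simp [hz] at this
        have hne : s(z, a) ≠ s(z, b) := by
          intro hEq
          rw [Sym2.eq_iff] at hEq
          rcases hEq with ⟨-, h⟩ | ⟨h1, h2⟩
          · exact hab h
          · exact (cube d).ne_of_adj he1 h2.symm
        obtain ⟨s, hs, -⟩ := hSe _ ((cube d).mem_edgeSet.mpr he1) _
          ((cube d).mem_edgeSet.mpr he2) hne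
        simp at hs
      · have hd1 : d = 1 := by omega
        subst hd1
        have key : ∀ u v : Fin 1 → Bool, u ≠ v →
            hammingDist (fun _ => false) u ≠ hammingDist (fun _ => false) v := by decide
        have hgen : IsMetricGen (cube 1) ↑({(fun _ => false : Fin 1 → Bool)} : Finset _) := by
          intro u v huv
          refine ⟨fun _ => false, by simp, ?_⟩
          rw [cube_dist, cube_dist]
          exact key u v huv
        have h1 : metricDim (cube 1) ≤ 1 :=
          Nat.sInf_le ⟨_, Finset.card_singleton _, hgen⟩
        simp at hSecard
        omega
    · have hT := edge_to_metric hd s0 hs0 hSe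
      have h1 : metricDim (cube d) ≤
          (insert (Function.update s0 ⟨0, hd⟩ (!s0 ⟨0, hd⟩)) Se).card :=
        Nat.sInf_le ⟨_, rfl, hT⟩
      have h2 := Finset.card_insert_le (Function.update s0 ⟨0, hd⟩ (!s0 ⟨0, hd⟩)) Se
      omega
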